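/- Let n ∈ ℕ with n ≡ 6 (mod 8), let V = V1 ∪ V2 be a partition of an n-element set with |V1| = (3n−2)/4, let M be a perfect matching on V2 (a partition of V2 into 2-element sets), and let H be the simplicial complex on V whose edge set is the downward closure of {{a,b,c} : {a,b} ∈ M, c ∈ V1} ∪ {all 2-element subsets of V1}. Then H is B-free and e(H) = (9/8)·binom(n,2) + (21/16)·n + 5/4; in particular, ex(n,B) ≥ (9/8)·binom(n,2) + (21/16)·n + 5/4. -/

import Mathlib

open Finset

/-- `E` is the edge set of a simplicial complex: it is closed under taking subsets. -/
def IsComplex {α : Type*} [DecidableEq α] (E : Finset (Finset α)) : Prop :=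
  ∀ e ∈ E, ∀ f ⊆ e, f ∈ E

/-- `H` contains a copy of `F`: an injection of the vertices mapping edges to edges. -/
def HasCopy {α β : Type*} [DecidableEq β]
    (F : Finset (Finset α)) (H : Finset (Finset β)) : Prop :=
  ∃ f : α → β, Function.Injective f ∧ ∀ e ∈ F, e.image f ∈ H

/-- downward closure of a family of sets -/
def dClosure {α : Type*} [DecidableEq α] (S : Finset (Finset α)) : Finset (Finset α) :=
  S.biUnion Finset.powerset

/-- `ex(n,F)`: the extremal number for simplicial complexes -/
noncomputable def exSC {α : Type*} (n : ℕ) (F : Finset (Finset α)) : ℕ :=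
  sSup {m | ∃ E : Finset (Finset (Fin n)), IsComplex E ∧ ¬ HasCopy F E ∧ E.card = m}

/-- `ex^(k)(n,F)`: the extremal number for `k`-uniform hypergraphs -/
noncomputable def exUnif {α : Type*} (k n : ℕ) (F : Finset (Finset α)) : ℕ :=
  sSup {m | ∃ E : Finset (Finset (Fin n)),
    (∀ e ∈ E, e.card = k) ∧ ¬ HasCopy F E ∧ E.card = m}

/-- the complex `B`: downward closure of `{{v3,v4},{v1,v2,v3},{v1,v4,v5}}`
(vertices `v1,…,v5` are `0,…,4`) -/
def B : Finset (Finset (Fin 5)) :=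
  dClosure {{2, 3}, {0, 1, 2}, {0, 3, 4}}

theorem statement2 {V : Type*} [Fintype V] [DecidableEq V] (n : ℕ)
    (hcard : Fintype.card V = n) (hmod : n % 8 = 6)
    (V1 : Finset V) (hV1 : 4 * V1.card = 3 * n - 2)
    (M : Finset (Finset V))
    (hM2 : ∀ m ∈ M, m.card = 2)
    (hMdisj : ∀ m ∈ M, ∀ m' ∈ M, m ≠ m' → Disjoint m m')
    (hMcover : M.biUnion id = V1ᶜ)
    (E : Finset (Finset V))
    (hE : E = dClosure
      ((M.biUnion fun m => V1.image fun c => insert c m) ∪ V1.powersetCard 2)) :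
    ¬ HasCopy B E ∧
    (E.card : ℚ) = 9 / 8 * (n.choose 2 : ℚ) + 21 / 16 * (n : ℚ) + 5 / 4 ∧
    9 / 8 * (n.choose 2 : ℚ) + 21 / 16 * (n : ℚ) + 5 / 4 ≤ (exSC n B : ℚ) := by
  have hn6 : 6 ≤ n := by omega
  have hs2 : 2 ≤ V1.card := by omega
  have hV2 : ∀ m ∈ M, ∀ x ∈ m, x ∉ V1 := by
    intro m hm x hx
    have : x ∈ M.biUnion id := mem_biUnion.mpr ⟨m, hm, hx⟩
    rw [hMcover, mem_compl] at this; exact this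
  have meq : ∀ m ∈ M, ∀ m' ∈ M, ∀ x, x ∈ m → x ∈ m' → m = m' := by
    intro m hm m' hm' x hx hx'
    by_contra hne
    exact (Finset.disjoint_left.mp (hMdisj m hm m' hm' hne)) hx hx'
  have memE : ∀ e, e ∈ E ↔ (∃ m ∈ M, ∃ c ∈ V1, e ⊆ insert c m) ∨ (e ⊆ V1 ∧ e.card ≤ 2) := by
    intro e
    simp only [hE, dClosure, mem_biUnion, mem_union, mem_powerset, mem_powersetCard]
    constructor
    · rintro ⟨g, (hg | hg), hsub⟩
      · obtain ⟨m, hm, c, hc, rfl⟩ := by simpa using hg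
        exact Or.inl ⟨m, hm, c, hc, hsub⟩
      · exact Or.inr ⟨hsub.trans hg.1, (card_le_card hsub).trans_eq hg.2⟩
    · rintro (⟨m, hm, c, hc, hsub⟩ | ⟨hsub, hcard2⟩)
      · refine ⟨insert c m, Or.inl ?_, hsub⟩
        exact ⟨m, hm, mem_image_of_mem _ hc⟩
      · obtain ⟨u, hu1, hu2, hu3⟩ := Finset.exists_subsuperset_card_eq hsub hcard2 hs2
        exact ⟨u, Or.inr ⟨hu2, hu3⟩, hu1⟩
  have hfree : ¬ HasCopy B E := by
    -- triples in E
    have tri : ∀ x ∈ E, x.card = 3 → ∃ c ∈ V1, ∃ m ∈ M, x = insert c m := by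
      intro x hx h3
      rcases (memE x).mp hx with ⟨m, hm, c, hc, hsub⟩ | ⟨_, hle⟩
      · have hcm : c ∉ m := fun h => hV2 m hm c h hc
        have : (insert c m).card = 3 := by rw [card_insert_of_notMem hcm, hM2 m hm]
        exact ⟨c, hc, m, hm, eq_of_subset_of_card_le hsub (by omega)⟩
      · omega
    -- pairs in E with both endpoints outside V1
    have pairE : ∀ a b : V, ({a, b} : Finset V) ∈ E → a ∉ V1 → b ∉ V1 →
        ∃ m ∈ M, a ∈ m ∧ b ∈ m := by
      intro a b hab ha hb
      rcases (memE _).mp hab with ⟨m, hm, c, hc, hsub⟩ | ⟨hsub, _⟩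
      · have ha' : a ∈ insert c m := hsub (by simp)
        have hb' : b ∈ insert c m := hsub (by simp)
        refine ⟨m, hm, ?_, ?_⟩
        · rcases mem_insert.mp ha' with h | h
          · exact absurd (h ▸ hc) ha
          · exact h
        · rcases mem_insert.mp hb' with h | h
          · exact absurd (h ▸ hc) hb
          · exact h
      · exact absurd (hsub (by simp)) ha
    rintro ⟨f, hf, hB⟩
    have h1 : ({f 0, f 1, f 2} : Finset V) ∈ E := by
      have := hB {0,1,2} (by decide); simpa [Finset.image_insert] using this
    have h2 : ({f 0, f 3, f 4} : Finset V) ∈ E := by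
      have := hB {0,3,4} (by decide); simpa [Finset.image_insert] using this
    have hp : ({f 2, f 3} : Finset V) ∈ E := by
      have := hB {2,3} (by decide); simpa [Finset.image_insert] using this
    have hne : ∀ i j : Fin 5, i ≠ j → f i ≠ f j := fun i j hij h => hij (hf h)
    have key : ∀ x, x ∈ ({f 0, f 1, f 2} : Finset V) → x ∈ ({f 0, f 3, f 4} : Finset V) →
        x = f 0 := by
      intro x hx hy
      simp only [mem_insert, mem_singleton] at hx hy
      rcases hx with rfl | rfl | rfl
      · rfl
      · rcases hy with h | h | h
        · exact h
        · exact absurd (hf h) (by decide)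
        · exact absurd (hf h) (by decide)
      · rcases hy with h | h | h
        · exact h
        · exact absurd (hf h) (by decide)
        · exact absurd (hf h) (by decide)
    have c31 : ({f 0, f 1, f 2} : Finset V).card = 3 := by
      rw [card_insert_of_notMem (by simp [hne 0 1 (by decide), hne 0 2 (by decide)]),
        card_insert_of_notMem (by simp [hne 1 2 (by decide)]), card_singleton]
    have c32 : ({f 0, f 3, f 4} : Finset V).card = 3 := by
      rw [card_insert_of_notMem (by simp [hne 0 3 (by decide), hne 0 4 (by decide)]),
        card_insert_of_notMem (by simp [hne 3 4 (by decide)]), card_singleton]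
    obtain ⟨c1, hc1, m1, hm1, he1⟩ := tri _ h1 c31
    obtain ⟨c2, hc2, m2, hm2, he2⟩ := tri _ h2 c32
    have hc1f : c1 = f 0 := by
      by_contra hcne
      have hf01 : f 0 ∈ insert c1 m1 := he1 ▸ (by simp : f 0 ∈ ({f 0, f 1, f 2} : Finset V))
      have hf0m1 : f 0 ∈ m1 := by
        rcases mem_insert.mp hf01 with h | h
        · exact absurd h.symm hcne
        · exact h
      have hf0V : f 0 ∉ V1 := hV2 m1 hm1 _ hf0m1
      by_cases hc2f : c2 = f 0
      · exact hf0V (hc2f ▸ hc2)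
      · have hf02 : f 0 ∈ insert c2 m2 := he2 ▸ (by simp : f 0 ∈ ({f 0, f 3, f 4} : Finset V))
        have hf0m2 : f 0 ∈ m2 := by
          rcases mem_insert.mp hf02 with h | h
          · exact absurd h.symm hc2f
          · exact h
        have hmm : m1 = m2 := meq m1 hm1 m2 hm2 _ hf0m1 hf0m2
        -- m1 ⊆ {f 0}
        have hsub1 : m1 ⊆ {f 0} := by
          intro x hx
          have hx1 : x ∈ ({f 0, f 1, f 2} : Finset V) := he1 ▸ subset_insert _ _ hx
          have hx2 : x ∈ ({f 0, f 3, f 4} : Finset V) := he2 ▸ subset_insert _ _ (hmm ▸ hx)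
          simpa using key x hx1 hx2
        have := card_le_card hsub1
        rw [hM2 m1 hm1, card_singleton] at this
        omega
    have hc2f : c2 = f 0 := by
      by_contra hcne
      have hf02 : f 0 ∈ insert c2 m2 := he2 ▸ (by simp : f 0 ∈ ({f 0, f 3, f 4} : Finset V))
      have hf0m2 : f 0 ∈ m2 := by
        rcases mem_insert.mp hf02 with h | h
        · exact absurd h.symm hcne
        · exact h
      exact hV2 m2 hm2 _ hf0m2 (hc1f ▸ hc1)
    have hf2m1 : f 2 ∈ m1 := by
      have : f 2 ∈ insert c1 m1 := he1 ▸ (by simp : f 2 ∈ ({f 0, f 1, f 2} : Finset V))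
      rcases mem_insert.mp this with h | h
      · exact absurd (h.trans hc1f) (hne 2 0 (by decide))
      · exact h
    have hf3m2 : f 3 ∈ m2 := by
      have : f 3 ∈ insert c2 m2 := he2 ▸ (by simp : f 3 ∈ ({f 0, f 3, f 4} : Finset V))
      rcases mem_insert.mp this with h | h
      · exact absurd (h.trans hc2f) (hne 3 0 (by decide))
      · exact h
    obtain ⟨m, hm, hf2m, hf3m⟩ := pairE (f 2) (f 3) hp (hV2 m1 hm1 _ hf2m1) (hV2 m2 hm2 _ hf3m2)
    have e1 : m = m1 := meq m hm m1 hm1 _ hf2m hf2m1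
    have e2 : m = m2 := meq m hm m2 hm2 _ hf3m hf3m2
    have hf3m1 : f 3 ∈ m1 := e1 ▸ e2 ▸ hf3m2
    have hx1 : f 3 ∈ ({f 0, f 1, f 2} : Finset V) := he1 ▸ subset_insert _ _ hf3m1
    have : f 3 = f 0 := key _ hx1 (by simp)
    exact hne 3 0 (by decide) this
  have hcount : (E.card : ℚ) = 9 / 8 * (n.choose 2 : ℚ) + 21 / 16 * (n : ℚ) + 5 / 4 := by
    obtain ⟨c0, hc0⟩ : V1.Nonempty := card_pos.mp (by omega)
    set A0 : Finset (Finset V) := {∅} with hA0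
    set A1 : Finset (Finset V) := univ.image (fun v => ({v} : Finset V)) with hA1
    set A2 : Finset (Finset V) := V1.powersetCard 2 with hA2
    set A4 : Finset (Finset V) := V1.biUnion (fun c => V1ᶜ.image fun a => ({c, a} : Finset V))
      with hA4
    set A5 : Finset (Finset V) := M.biUnion (fun m => V1.image fun c => insert c m) with hA5
    have cardA5 : ∀ e ∈ A5, e.card = 3 := by
      intro e he
      obtain ⟨m, hm, c, hc, rfl⟩ := by simpa [hA5] using he
      rw [card_insert_of_notMem (fun h => hV2 m hm c h hc), hM2 m hm]
    have cardA4 : ∀ e ∈ A4, e.card = 2 ∧ (∃ c ∈ V1, c ∈ e) ∧ ∃ a, a ∈ e ∧ a ∉ V1 := by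
      intro e he
      obtain ⟨c, hc, a, ha, rfl⟩ := by simpa [hA4] using he
      refine ⟨?_, ⟨c, hc, by simp⟩, ⟨a, by simp, ha⟩⟩
      rw [card_insert_of_notMem (by simp; rintro rfl; exact ha hc), card_singleton]
    have cardM : ∀ e ∈ M, e.card = 2 ∧ ∀ x ∈ e, x ∉ V1 := fun e he => ⟨hM2 e he, hV2 e he⟩
    -- E as explicit disjoint union
    have Eeq : E = A0 ∪ A1 ∪ A2 ∪ M ∪ A4 ∪ A5 := by
      ext e
      simp only [mem_union]
      rw [memE]
      constructor
      · rintro (⟨m, hm, c, hc, hsub⟩ | ⟨hsub, hle⟩)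
        · have hle3 : e.card ≤ 3 := by
            have := card_le_card hsub
            have h3 : (insert c m).card = 3 := by
              rw [card_insert_of_notMem (fun h => hV2 m hm c h hc), hM2 m hm]
            omega
          interval_cases h : e.card
          · left; left; left; left; left; simp [hA0, card_eq_zero.mp h]
          · obtain ⟨v, rfl⟩ := card_eq_one.mp h
            left; left; left; left; right; simp [hA1]
          · by_cases hce : c ∈ e
            · -- e = {c, a} with a ∈ m
              left; right
              obtain ⟨a, ha, hane⟩ : ∃ a ∈ e, a ≠ c := by
                by_contra hcon
                push_neg at hcon
                have hsube : e ⊆ {c} := fun x hx => mem_singleton.mpr (hcon x hx)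
                have := card_le_card hsube
                simp at this; omega
              have ham : a ∈ m := by
                rcases mem_insert.mp (hsub ha) with h' | h'
                · exact absurd h' hane
                · exact h'
              have hsub2 : ({c, a} : Finset V) ⊆ e := by
                intro x hx
                rcases mem_insert.mp hx with rfl | hx
                · exact hce
                · exact (mem_singleton.mp hx) ▸ ha
              have hc2 : ({c, a} : Finset V).card = 2 := by
                rw [card_insert_of_notMem (notMem_singleton.mpr hane.symm), card_singleton]
              have hee : ({c, a} : Finset V) = e := eq_of_subset_of_card_le hsub2 (by omega)
              simp only [hA4, mem_biUnion]
              refine ⟨c, hc, ?_⟩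
              rw [← hee]
              exact mem_image_of_mem _ (mem_compl.mpr (hV2 m hm a ham))
            · -- e ⊆ m so e = m
              left; left; right
              have hem : e ⊆ m := by
                intro x hx
                rcases mem_insert.mp (hsub hx) with h' | h'
                · exact absurd (h' ▸ hx) hce
                · exact h'
              have : e = m := Finset.eq_of_subset_of_card_le hem (by rw [hM2 m hm]; omega)
              exact this ▸ hm
          · right
            have : e = insert c m := Finset.eq_of_subset_of_card_le hsub (by
              rw [card_insert_of_notMem (fun h => hV2 m hm c h hc), hM2 m hm]; omega)
            simp only [hA5, mem_biUnion]
            exact ⟨m, hm, by rw [this]; exact mem_image_of_mem _ hc⟩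
        · interval_cases h : e.card
          · left; left; left; left; left; simp [hA0, card_eq_zero.mp h]
          · obtain ⟨v, rfl⟩ := card_eq_one.mp h
            left; left; left; left; right; simp [hA1]
          · left; left; left; right; exact mem_powersetCard.mpr ⟨hsub, h⟩
      · rintro (((((h | h) | h) | h) | h) | h)
        · rw [hA0, mem_singleton] at h
          subst h
          exact Or.inr ⟨empty_subset _, by simp⟩
        · obtain ⟨v, -, rfl⟩ := by simpa [hA1] using h
          by_cases hv : v ∈ V1
          · exact Or.inr ⟨by simpa using hv, by simp⟩
          · have : v ∈ M.biUnion id := by rw [hMcover]; simpa using hv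
            obtain ⟨m, hm, hvm⟩ := mem_biUnion.mp this
            exact Or.inl ⟨m, hm, c0, hc0, by
              simp only [Finset.singleton_subset_iff, mem_insert]
              exact Or.inr hvm⟩
        · rw [hA2, mem_powersetCard] at h
          exact Or.inr ⟨h.1, le_of_eq h.2⟩
        · exact Or.inl ⟨e, h, c0, hc0, subset_insert _ _⟩
        · obtain ⟨c, hc, a, ha, rfl⟩ := by simpa [hA4] using h
          have : a ∈ M.biUnion id := by rw [hMcover]; simpa using ha
          obtain ⟨m, hm, ham⟩ := mem_biUnion.mp this
          refine Or.inl ⟨m, hm, c, hc, ?_⟩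
          intro x hx
          rcases mem_insert.mp hx with rfl | hx
          · exact mem_insert_self _ _
          · exact mem_insert_of_mem ((mem_singleton.mp hx) ▸ ham)
        · obtain ⟨m, hm, c, hc, rfl⟩ := by simpa [hA5] using h
          exact Or.inl ⟨m, hm, c, hc, subset_refl _⟩

    -- cardinalities of the pieces
    have cA0 : A0.card = 1 := card_singleton _
    have cA1 : A1.card = n := by
      rw [hA1, card_image_of_injective _ Finset.singleton_injective, card_univ, hcard]
    have cA2 : A2.card = V1.card.choose 2 := card_powersetCard 2 V1
    have cA4 : A4.card = V1.card * V1ᶜ.card := by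
      rw [hA4, card_biUnion]
      · rw [Finset.sum_congr rfl (fun c hc => ?_), Finset.sum_const, smul_eq_mul]
        apply card_image_of_injOn
        intro a ha b hb hab
        have : a ∈ ({c, b} : Finset V) := by
          rw [show ({c, b} : Finset V) = {c, a} from hab.symm]
          exact mem_insert_of_mem (mem_singleton_self a)
        rcases mem_insert.mp this with rfl | h
        · exact absurd hc (mem_compl.mp ha)
        · exact mem_singleton.mp h
      · intro c hc c' hc' hcc
        rw [Function.onFun, Finset.disjoint_left]
        rintro e he he'
        obtain ⟨a, ha, rfl⟩ := mem_image.mp he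
        obtain ⟨a', ha', heq⟩ := mem_image.mp he'
        have : c' ∈ ({c, a} : Finset V) := heq ▸ mem_insert_self c' {a'}
        rcases mem_insert.mp this with h | h
        · exact hcc h.symm
        · exact (mem_compl.mp ha) ((mem_singleton.mp h) ▸ hc')
    have cA5 : A5.card = M.card * V1.card := by
      rw [hA5, card_biUnion]
      · rw [Finset.sum_congr rfl (fun m hm => ?_), Finset.sum_const, smul_eq_mul]
        apply card_image_of_injOn
        intro c hc c' hc' hcc
        have : c' ∈ insert c m := by
          rw [show insert c m = insert c' m from hcc]
          exact mem_insert_self c' m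
        rcases mem_insert.mp this with h | h
        · exact h.symm
        · exact absurd hc' (hV2 m hm c' h)
      · intro m hm m' hm' hmm
        rw [Function.onFun, Finset.disjoint_left]
        rintro e he he'
        obtain ⟨c, hc, rfl⟩ := mem_image.mp he
        obtain ⟨c', hc', heq⟩ := mem_image.mp he'
        obtain ⟨x, hx⟩ : m.Nonempty := card_pos.mp (by rw [hM2 m hm]; omega)
        have hx1 : x ∈ insert c' m' := heq ▸ mem_insert_of_mem hx
        rcases mem_insert.mp hx1 with h | h
        · exact (hV2 m hm x hx) (h ▸ hc')
        · exact hmm (meq m hm m' hm' x hx h)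
    have hMt : 2 * M.card = V1ᶜ.card := by
      have hcb : (M.biUnion id).card = ∑ m ∈ M, (id m).card := card_biUnion hMdisj
      simp only [id_eq] at hcb
      rw [← hMcover, hcb,
        Finset.sum_congr rfl (fun m hm => hM2 m hm), Finset.sum_const, smul_eq_mul, mul_comm]
    have hst : V1.card + V1ᶜ.card = n := by rw [Finset.card_add_card_compl, hcard]
    -- disjointness
    have d01 : Disjoint A0 A1 := by
      rw [Finset.disjoint_left]
      intro e he he'
      rw [hA0, mem_singleton] at he
      obtain ⟨v, -, hv⟩ := mem_image.mp he'
      rw [he] at hv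
      exact (singleton_ne_empty v) hv
    have mA1card : ∀ e ∈ A1, e.card = 1 := by
      intro e he; obtain ⟨v, -, rfl⟩ := mem_image.mp he; exact card_singleton v
    have mA0card : ∀ e ∈ A0, e.card = 0 := by
      intro e he; rw [hA0, mem_singleton] at he; simp [he]
    have mA2card : ∀ e ∈ A2, e.card = 2 ∧ e ⊆ V1 := by
      intro e he; have := mem_powersetCard.mp he; exact ⟨this.2, this.1⟩
    have d2 : Disjoint (A0 ∪ A1) A2 := by
      rw [Finset.disjoint_left]
      rintro e he he'
      have h2 := (mA2card e he').1
      rcases mem_union.mp he with h | h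
      · have := mA0card e h; omega
      · have := mA1card e h; omega
    have d3 : Disjoint (A0 ∪ A1 ∪ A2) M := by
      rw [Finset.disjoint_left]
      rintro e he he'
      obtain ⟨h2, hout⟩ := cardM e he'
      rcases mem_union.mp he with h | h
      · rcases mem_union.mp h with h | h
        · have := mA0card e h; omega
        · have := mA1card e h; omega
      · obtain ⟨-, hsub⟩ := mA2card e h
        obtain ⟨x, hx⟩ : e.Nonempty := card_pos.mp (by omega)
        exact hout x hx (hsub hx)
    have d4 : Disjoint (A0 ∪ A1 ∪ A2 ∪ M) A4 := by
      rw [Finset.disjoint_left]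
      rintro e he he'
      obtain ⟨h2, ⟨c, hc, hce⟩, a, hae, haV⟩ := cardA4 e he'
      rcases mem_union.mp he with h | h
      · rcases mem_union.mp h with h | h
        · rcases mem_union.mp h with h | h
          · have := mA0card e h; omega
          · have := mA1card e h; omega
        · exact haV ((mA2card e h).2 hae)
      · exact (cardM e h).2 c hce hc
    have d5 : Disjoint (A0 ∪ A1 ∪ A2 ∪ M ∪ A4) A5 := by
      rw [Finset.disjoint_left]
      rintro e he he'
      have h3 := cardA5 e he'
      rcases mem_union.mp he with h | h
      · rcases mem_union.mp h with h | h
        · rcases mem_union.mp h with h | h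
          · rcases mem_union.mp h with h | h
            · have := mA0card e h; omega
            · have := mA1card e h; omega
          · have := (mA2card e h).1; omega
        · have := (cardM e h).1; omega
      · have := (cardA4 e h).1; omega
    have hEc : E.card = 1 + n + V1.card.choose 2 + M.card + V1.card * V1ᶜ.card
        + M.card * V1.card := by
      rw [Eeq, card_union_of_disjoint d5, card_union_of_disjoint d4, card_union_of_disjoint d3,
        card_union_of_disjoint d2, card_union_of_disjoint d01, cA0, cA1, cA2, cA4, cA5]
    -- arithmetic
    have q1 : 4 * (V1.card : ℚ) + 2 = 3 * n := by
      have : 4 * V1.card + 2 = 3 * n := by omega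
      exact_mod_cast this
    have q2 : (V1.card : ℚ) + V1ᶜ.card = n := by exact_mod_cast hst
    have q3 : 2 * (M.card : ℚ) = V1ᶜ.card := by exact_mod_cast hMt
    have hs : (V1.card : ℚ) = (3 * n - 2) / 4 := by linarith
    have ht : (V1ᶜ.card : ℚ) = ((n : ℚ) + 2) / 4 := by linarith
    have hk : (M.card : ℚ) = ((n : ℚ) + 2) / 8 := by linarith
    rw [hEc]
    push_cast [Nat.cast_choose_two]
    rw [hs, ht, hk]
    ring
  refine ⟨hfree, hcount, ?_⟩
  rw [← hcount]
  have hcmp : IsComplex E := by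
    intro e he f hf
    rw [hE] at he ⊢
    simp only [dClosure, mem_biUnion, mem_powerset] at he ⊢
    obtain ⟨g, hg, hsub⟩ := he
    exact ⟨g, hg, hf.trans hsub⟩
  have eqv : V ≃ Fin n := Fintype.equivFinOfCardEq hcard
  set E' : Finset (Finset (Fin n)) := E.image (Finset.image eqv) with hE'
  have hinj : Function.Injective (Finset.image (eqv : V → Fin n)) :=
    fun s t h => by
      ext x
      constructor
      · intro hx
        have : eqv x ∈ t.image eqv := h ▸ mem_image_of_mem _ hx
        obtain ⟨y, hy, hxy⟩ := mem_image.mp this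
        exact (eqv.injective hxy) ▸ hy
      · intro hx
        have : eqv x ∈ s.image eqv := h.symm ▸ mem_image_of_mem _ hx
        obtain ⟨y, hy, hxy⟩ := mem_image.mp this
        exact (eqv.injective hxy) ▸ hy
  have hc' : E'.card = E.card := card_image_of_injective _ hinj
  have hcmp' : IsComplex E' := by
    intro e he f hf
    obtain ⟨x, hx, rfl⟩ := mem_image.mp he
    have : f = (f.image ⇑eqv.symm).image ⇑eqv := by
      rw [Finset.image_image]
      simp
    rw [this]
    refine mem_image_of_mem _ (hcmp x hx _ ?_)
    intro y hy
    obtain ⟨z, hz, rfl⟩ := mem_image.mp hy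
    have := hf hz
    obtain ⟨w, hw, hwz⟩ := mem_image.mp this
    rwa [show w = eqv.symm z from by simp [← hwz]] at hw
  have hfree' : ¬ HasCopy B E' := by
    rintro ⟨f, hf, hB⟩
    refine hfree ⟨fun i => eqv.symm (f i), fun i j h => hf (eqv.symm.injective h), ?_⟩
    intro e he
    have := hB e he
    obtain ⟨x, hx, hxe⟩ := mem_image.mp this
    have : e.image (fun i => eqv.symm (f i)) = x := by
      rw [show e.image (fun i => eqv.symm (f i)) = (e.image f).image ⇑eqv.symm from
        (Finset.image_image).symm, ← hxe, Finset.image_image]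
      simp
    rwa [this]
  have hmem : E.card ∈ {m | ∃ E : Finset (Finset (Fin n)),
      IsComplex E ∧ ¬ HasCopy B E ∧ E.card = m} := ⟨E', hcmp', hfree', hc'⟩
  have hbdd : BddAbove {m | ∃ E : Finset (Finset (Fin n)),
      IsComplex E ∧ ¬ HasCopy B E ∧ E.card = m} := by
    refine ⟨2 ^ n, ?_⟩
    rintro m ⟨F, -, -, rfl⟩
    calc F.card ≤ (univ : Finset (Finset (Fin n))).card := card_le_card (subset_univ F)
    _ = 2 ^ n := by simp
  have : E.card ≤ exSC n B := le_csSup hbdd hmem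
  exact_mod_cast this
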